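/- Let K be a simplicial complex with a leaf {a, ab} and let c be a neighbor of b with c ≠ a. Then the vertex (b, bc) of the Morse complex M(K) is dominated by the vertex (a, ab). -/

import Mathlib

open Finset

/-- An abstract simplicial complex on vertex type `V`. -/
structure SComplex (V : Type*) where
  faces : Finset V → Prop
  not_empty : ¬ faces ∅
  down_closed : ∀ {σ τ : Finset V}, faces τ → σ ⊆ τ → σ.Nonempty → faces σ

/-- The complex generated by a set of simplices (downward closure). -/
def ofGens {V : Type*} (gens : Set (Finset V)) : SComplex V where
  faces σ := σ.Nonempty ∧ ∃ τ ∈ gens, σ ⊆ τ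
  not_empty h := by simpa using h.1
  down_closed := by
    rintro σ τ ⟨-, τ', hτ', hsub'⟩ hsub hne
    exact ⟨hne, τ', hτ', hsub.trans hsub'⟩

/-- A primitive (gradient) vector field on `K`: a single regular pair `(σ, τ)`
with `σ` a codimension-one face of `τ`. -/
structure VPair {V : Type*} (K : SComplex V) where
  lo : Finset V
  hi : Finset V
  lo_face : K.faces lo
  hi_face : K.faces hi
  lo_sub : lo ⊆ hi
  card_eq : hi.card = lo.card + 1

noncomputable instance {V : Type*} (K : SComplex V) : DecidableEq (VPair K) :=
  Classical.decEq _

/-- Two primitive pairs share no simplex. -/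
def VPair.Compatible {V : Type*} {K : SComplex V} (p q : VPair K) : Prop :=
  p.lo ≠ q.lo ∧ p.lo ≠ q.hi ∧ p.hi ≠ q.lo ∧ p.hi ≠ q.hi

/-- A discrete vector field: each simplex occurs in at most one pair. -/
def IsDVF {V : Type*} {K : SComplex V} (W : Set (VPair K)) : Prop :=
  ∀ p ∈ W, ∀ q ∈ W, p ≠ q → VPair.Compatible p q

/-- Existence of a nontrivial closed `V`-path. -/
def HasClosedPath {V : Type*} {K : SComplex V} (W : Set (VPair K)) : Prop :=
  ∃ k : ℕ, 0 < k ∧ ∃ c : ZMod k → VPair K, (∀ i, c i ∈ W) ∧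
    ∀ i, (c (i + 1)).lo ⊆ (c i).hi ∧ (c (i + 1)).lo ≠ (c i).lo ∧
      (c (i + 1)).lo.card + 1 = (c i).hi.card

/-- A gradient vector field: a discrete vector field with no nontrivial closed path. -/
def IsGVF {V : Type*} {K : SComplex V} (W : Set (VPair K)) : Prop :=
  IsDVF W ∧ ¬ HasClosedPath W

/-- The Morse complex of `K`: vertices are primitive gradient vector fields,
simplices are gradient vector fields. -/
def MorseComplex {V : Type*} (K : SComplex V) : SComplex (VPair K) where
  faces S := S.Nonempty ∧ IsGVF {p | p ∈ S}
  not_empty h := by simpa using h.1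
  down_closed := by
    rintro σ τ ⟨hne', hdvf, hnc⟩ hsub hne
    refine ⟨hne, fun p hp q hq hpq => hdvf p (hsub hp) q (hsub hq) hpq, fun h => hnc ?_⟩
    obtain ⟨k, hk, c, hc, hpath⟩ := h
    exact ⟨k, hk, c, fun i => hsub (hc i), hpath⟩

/-- The pure Morse complex: the subcomplex of `MorseComplex K` generated by the
facets of maximum dimension (maximum gradient vector fields). -/
def pureMorse {V : Type*} (K : SComplex V) : SComplex (VPair K) where
  faces S := (MorseComplex K).faces S ∧ ∃ T : Finset (VPair K), S ⊆ T ∧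
      (MorseComplex K).faces T ∧
      ∀ T' : Finset (VPair K), (MorseComplex K).faces T' → T'.card ≤ T.card
  not_empty h := (MorseComplex K).not_empty h.1
  down_closed := by
    rintro σ τ ⟨hτ, T, hsub', hT, hmax⟩ hsub hne
    exact ⟨(MorseComplex K).down_closed hτ hsub hne, T, hsub.trans hsub', hT, hmax⟩

/-- `σ` is a facet (maximal simplex) of `K`. -/
def IsFacet {V : Type*} (K : SComplex V) (σ : Finset V) : Prop :=
  K.faces σ ∧ ∀ τ, K.faces τ → σ ⊆ τ → σ = τ

/-- `w` dominates `w'`: every facet containing `w'` contains `w`. -/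
def Dominates {V : Type*} (K : SComplex V) (w w' : V) : Prop :=
  ∀ σ, IsFacet K σ → w' ∈ σ → w ∈ σ

/-- `K` is minimal: no vertex dominates another vertex. -/
def MinimalComplex {V : Type*} (K : SComplex V) : Prop :=
  ∀ w w' : V, K.faces {w} → K.faces {w'} → w ≠ w' → ¬ Dominates K w w'

/-- Strong collapsibility of a face predicate: a sequence of removals of
dominated vertices reaching a single point. -/
inductive SCAux {V : Type*} : (Finset V → Prop) → Prop
  | point (F : Finset V → Prop) (v : V) (h : ∀ σ, F σ ↔ σ = {v}) : SCAux F
  | step (F : Finset V → Prop) (w w' : V) (hne : w ≠ w') (hw : F {w}) (hw' : F {w'})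
      (hdom : ∀ σ, (F σ ∧ ∀ τ, F τ → σ ⊆ τ → σ = τ) → w' ∈ σ → w ∈ σ)
      (h : SCAux (fun σ => F σ ∧ w' ∉ σ)) : SCAux F

def StronglyCollapsible {V : Type*} (K : SComplex V) : Prop := SCAux K.faces

/-- `F` strongly collapses to `G` by a sequence of removals of dominated vertices. -/
inductive SCTo {V : Type*} : (Finset V → Prop) → (Finset V → Prop) → Prop
  | refl (F : Finset V → Prop) : SCTo F F
  | step (F G : Finset V → Prop) (w w' : V) (hne : w ≠ w') (hw : F {w}) (hw' : F {w'})
      (hdom : ∀ σ, (F σ ∧ ∀ τ, F τ → σ ⊆ τ → σ = τ) → w' ∈ σ → w ∈ σ)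
      (h : SCTo (fun σ => F σ ∧ w' ∉ σ) G) : SCTo F G

/-- Collapsibility (Forman): removal of free pairs down to a point. -/
inductive CollAux {V : Type*} : (Finset V → Prop) → Prop
  | point (F : Finset V → Prop) (v : V) (h : ∀ σ, F σ ↔ σ = {v}) : CollAux F
  | step (F : Finset V → Prop) (σ τ : Finset V) (hστ : σ ⊂ τ) (hσ : F σ) (hτ : F τ)
      (hfree : ∀ ρ, F ρ → σ ⊂ ρ → ρ = τ)
      (h : CollAux (fun ρ => F ρ ∧ ρ ≠ σ ∧ ρ ≠ τ)) : CollAux F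

def Collapsible {V : Type*} (K : SComplex V) : Prop := CollAux K.faces

/-- The degree of a vertex: the number of edges of `K` containing it. -/
noncomputable def sdeg {V : Type*} (K : SComplex V) (x : V) : ℕ :=
  Set.ncard {σ : Finset V | K.faces σ ∧ σ.card = 2 ∧ x ∈ σ}

/-- Image of a finset, with a classical decidability instance. -/
noncomputable def fimage {V W : Type*} (f : V → W) (σ : Finset V) : Finset W :=
  haveI := Classical.decEq W
  σ.image f

/-- An isomorphism between two simplicial complexes given by face predicates. -/
structure ComplexIso {V W : Type*} (F : Finset V → Prop) (G : Finset W → Prop) where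
  toFun : V → W
  invFun : W → V
  left_inv : ∀ x, F {x} → invFun (toFun x) = x
  right_inv : ∀ y, G {y} → toFun (invFun y) = y
  map_face : ∀ σ, F σ → G (fimage toFun σ)
  inv_face : ∀ τ, G τ → F (fimage invFun τ)

/-- The join of two simplicial complexes. -/
def sJoin {V W : Type*} [DecidableEq V] [DecidableEq W] (K : SComplex V) (L : SComplex W) :
    SComplex (V ⊕ W) :=
  ofGens {σ | ∃ α β, (K.faces α ∨ α = ∅) ∧ (L.faces β ∨ β = ∅) ∧
    σ = α.image Sum.inl ∪ β.image Sum.inr}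

/-- The disjoint union of two simplicial complexes. -/
def sDisjUnion {V W : Type*} [DecidableEq V] [DecidableEq W] (K : SComplex V) (L : SComplex W) :
    SComplex (V ⊕ W) :=
  ofGens ({σ | ∃ α, K.faces α ∧ σ = α.image Sum.inl} ∪
          {σ | ∃ β, L.faces β ∧ σ = β.image Sum.inr})

/-- The simplicial complex of a simple graph (vertices and edges). -/
def graphComplex {V : Type*} [DecidableEq V] (G : SimpleGraph V) : SComplex V :=
  ofGens ({σ | ∃ x, σ = {x}} ∪ {σ | ∃ x y, G.Adj x y ∧ σ = ({x, y} : Finset V)})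

/-- Attach a leaf (pendant edge) to `K` at the vertex `x`. -/
def attachLeaf {V : Type*} [DecidableEq V] (K : SComplex V) (x : V) : SComplex (V ⊕ Unit) :=
  ofGens ({σ | ∃ α, K.faces α ∧ σ = α.image Sum.inl} ∪
          {({Sum.inl x, Sum.inr ()} : Finset (V ⊕ Unit))})

/-- The cycle graph on `ZMod n`. -/
def cycleGraph (n : ℕ) : SimpleGraph (ZMod n) :=
  SimpleGraph.fromRel (fun i j => j = i + 1)

/-- Attach one new leaf to every vertex of a graph. -/
def addLeaves {V : Type*} [DecidableEq V] (G : SimpleGraph V) : SComplex (V ⊕ V) :=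
  ofGens ({σ | ∃ x y, G.Adj x y ∧ σ = ({Sum.inl x, Sum.inl y} : Finset (V ⊕ V))} ∪
          {σ | ∃ u, σ = ({Sum.inl u, Sum.inr u} : Finset (V ⊕ V))})

/-- The geometric realization of `K`, inside `V → ℝ`. -/
def realization {V : Type*} (K : SComplex V) : Set (V → ℝ) :=
  {f | ∃ σ, K.faces σ ∧ (∀ x, 0 ≤ f x) ∧ (∀ x, f x ≠ 0 → x ∈ σ) ∧ ∑ x ∈ σ, f x = 1}

/-- A Hasse-diagram edge of a poset: a covering pair. -/
structure HEdge (P : Type*) [PartialOrder P] where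
  lo : P
  hi : P
  cov : lo ⋖ hi

noncomputable instance {P : Type*} [PartialOrder P] : DecidableEq (HEdge P) :=
  Classical.decEq _

def HEdge.Compat {P : Type*} [PartialOrder P] (p q : HEdge P) : Prop :=
  p.lo ≠ q.lo ∧ p.lo ≠ q.hi ∧ p.hi ≠ q.lo ∧ p.hi ≠ q.hi

def HasPosetCycle {P : Type*} [PartialOrder P] (W : Set (HEdge P)) : Prop :=
  ∃ k : ℕ, 0 < k ∧ ∃ c : ZMod k → HEdge P, (∀ i, c i ∈ W) ∧
    ∀ i, (c (i + 1)).lo ⋖ (c i).hi ∧ (c (i + 1)).lo ≠ (c i).lo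

/-- The generalized Morse complex `f(P)` of a poset: simplices are acyclic
matchings of the Hasse diagram of `P`. -/
def genMorse (P : Type*) [PartialOrder P] : SComplex (HEdge P) where
  faces S := S.Nonempty ∧ (∀ p ∈ S, ∀ q ∈ S, p ≠ q → HEdge.Compat p q) ∧
    ¬ HasPosetCycle {p | p ∈ S}
  not_empty h := by simpa using h.1
  down_closed := by
    rintro σ τ ⟨-, hm, hc⟩ hsub hne
    refine ⟨hne, fun p hp q hq h => hm p (hsub hp) q (hsub hq) h, fun h => hc ?_⟩
    obtain ⟨k, hk, c, hc', hp⟩ := h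
    exact ⟨k, hk, c, fun i => hsub (hc' i), hp⟩

/-- The automorphism group of a simplicial complex, as a subgroup of `Perm V`. -/
def autGroup {V : Type*} [DecidableEq V] (K : SComplex V) : Subgroup (Equiv.Perm V) where
  carrier := {e | ∀ σ : Finset V, K.faces σ ↔ K.faces (σ.image e)}
  one_mem' := by intro σ; simp
  mul_mem' := by
    intro a b ha hb σ
    rw [hb σ, ha (σ.image b)]
    simp [Finset.image_image, Equiv.Perm.coe_mul]
  inv_mem' := by
    intro a ha σ
    have := ha (σ.image ⇑a⁻¹)
    simpa [Finset.image_image, Function.comp_def,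
      Finset.image_id'] using this.symm

/-- The full subcomplex of `K` on a set `S` of vertices. -/
def restrictTo {V : Type*} (K : SComplex V) (S : Set V) : Finset V → Prop :=
  fun σ => K.faces σ ∧ ∀ x ∈ σ, x ∈ S

/-- `S` spans a fully connected subcomplex: `K = (K∣S) * (K∣Sᶜ)`. -/
def FullyConnected {V : Type*} [DecidableEq V] (K : SComplex V) (S : Set V) : Prop :=
  ∀ σ : Finset V, K.faces σ ↔ (σ.Nonempty ∧ ∃ α β : Finset V,
    (restrictTo K S α ∨ α = ∅) ∧ ((K.faces β ∧ ∀ x ∈ β, x ∉ S) ∨ β = ∅) ∧ σ = α ∪ β)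

/-- The primitive pair `(x, xy)` on an edge `{x,y}`. -/
def edgePair {V : Type*} [DecidableEq V] (K : SComplex V) (x y : V) (hxy : x ≠ y)
    (h : K.faces {x, y}) : VPair K where
  lo := {x}
  hi := {x, y}
  lo_face := K.down_closed h (by simp) (Finset.singleton_nonempty x)
  hi_face := h
  lo_sub := by simp
  card_eq := by
    rw [Finset.card_singleton, Finset.card_insert_of_notMem (by simp [hxy]),
      Finset.card_singleton]


lemma VPair.ext' {V : Type*} {K : SComplex V} {p q : VPair K}
    (h1 : p.lo = q.lo) (h2 : p.hi = q.hi) : p = q := by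
  cases p; cases q; simp_all

lemma face_nonempty {V : Type*} {K : SComplex V} {σ : Finset V} (h : K.faces σ) :
    σ.Nonempty :=
  Finset.nonempty_of_ne_empty fun he => K.not_empty (he ▸ h)

lemma VPair.Compatible.symm' {V : Type*} {K : SComplex V} {p q : VPair K}
    (h : VPair.Compatible p q) : VPair.Compatible q p :=
  ⟨h.1.symm, h.2.2.1.symm, h.2.1.symm, h.2.2.2.symm⟩

/-- if `{a, ab}` is a leaf of `K` and `c ≠ a` is a neighbor of `b`,
then the vertex `(b, bc)` of `M(K)` is dominated by `(a, ab)`. -/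
theorem stmt_5 {V : Type*} [Fintype V] [DecidableEq V] (K : SComplex V) (a b c : V)
    (hab : a ≠ b) (hbc : b ≠ c) (hca : c ≠ a)
    (hfab : K.faces {a, b}) (hdega : sdeg K a = 1) (hfbc : K.faces {b, c}) :
    Dominates (MorseComplex K) (edgePair K a b hab hfab) (edgePair K b c hbc hfbc) := by
  intro σ hfacet hq
  set p := edgePair K a b hab hfab with hpdef
  set q := edgePair K b c hbc hfbc with hqdef
  by_cases hp : p ∈ σ
  · exact hp
  obtain ⟨hσne, hdvf, hnc⟩ := hfacet.1
  -- uniqueness of the edge at a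
  have huniq : ∀ e : Finset V, K.faces e → e.card = 2 → a ∈ e → e = ({a, b} : Finset V) := by
    obtain ⟨e0, he0⟩ := Set.ncard_eq_one.mp hdega
    have hab_mem : ({a, b} : Finset V) ∈ {σ : Finset V | K.faces σ ∧ σ.card = 2 ∧ a ∈ σ} :=
      ⟨hfab, Finset.card_pair hab, by simp⟩
    rw [he0] at hab_mem
    intro e hf hc hm
    have : e ∈ {σ : Finset V | K.faces σ ∧ σ.card = 2 ∧ a ∈ σ} := ⟨hf, hc, hm⟩
    rw [he0] at this
    rw [this, hab_mem]
  have hplo : p.lo = {a} := rfl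
  have hphi : p.hi = ({a, b} : Finset V) := rfl
  have hqlo : q.lo = {b} := rfl
  have hqhi : q.hi = ({b, c} : Finset V) := rfl
  -- compatibility of p with everything in σ
  have compat : ∀ r ∈ σ, VPair.Compatible p r := by
    intro r hr
    have hrp : r ≠ p := fun h => hp (h ▸ hr)
    have hlo1 : ({a} : Finset V) ≠ r.lo := by
      intro h
      have hhi : r.hi = ({a, b} : Finset V) := by
        apply huniq _ r.hi_face
        · rw [r.card_eq, ← h]; simp
        · exact r.lo_sub (by rw [← h]; simp)
      exact hrp (VPair.ext' (by rw [← h]; rfl) (by rw [hhi]; rfl))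
    have hhi1 : ({a} : Finset V) ≠ r.hi := by
      intro h
      have hsub := r.lo_sub
      rw [← h] at hsub
      rcases Finset.subset_singleton_iff.mp hsub with h' | h'
      · exact (face_nonempty r.lo_face).ne_empty h'
      · have := r.card_eq
        rw [← h, h'] at this
        simp at this
    have hlo2 : ({a, b} : Finset V) ≠ r.lo := by
      intro h
      have hcard : r.hi.card = 3 := by
        rw [r.card_eq, ← h, Finset.card_pair hab]
      have hss : r.lo ⊂ r.hi := by
        refine r.lo_sub.ssubset_of_ne fun he => ?_
        have := r.card_eq; rw [he] at this; omega
      obtain ⟨d, hd1, hd2⟩ := Finset.exists_of_ssubset hss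
      rw [← h] at hd2
      have hda : d ≠ a := fun h' => hd2 (by simp [h'])
      have hdb : d ≠ b := fun h' => hd2 (by simp [h'])
      have hsub : ({a, d} : Finset V) ⊆ r.hi := by
        intro x hx
        rcases Finset.mem_insert.mp hx with h' | h'
        · subst h'; exact r.lo_sub (by rw [← h]; simp)
        · rw [Finset.mem_singleton.mp h']; exact hd1
      have hface : K.faces ({a, d} : Finset V) :=
        K.down_closed r.hi_face hsub (by simp)
      have := huniq _ hface (Finset.card_pair (Ne.symm hda)) (by simp)
      have hdmem : d ∈ ({a, b} : Finset V) := this ▸ (by simp : d ∈ ({a, d} : Finset V))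
      simp [hda, hdb] at hdmem
    have hhi2 : ({a, b} : Finset V) ≠ r.hi := by
      intro h
      have hcard : r.lo.card = 1 := by
        have := r.card_eq
        rw [← h, Finset.card_pair hab] at this
        omega
      obtain ⟨x, hx⟩ := Finset.card_eq_one.mp hcard
      have hxm : x ∈ ({a, b} : Finset V) := by
        have : x ∈ r.hi := r.lo_sub (by rw [hx]; simp)
        rwa [← h] at this
      rcases Finset.mem_insert.mp hxm with h' | h'
      · exact hrp (VPair.ext' (by rw [hx, h']; rfl) (by rw [← h]; rfl))
      · rw [Finset.mem_singleton] at h'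
        have hrq : r ≠ q := by
          intro he
          rw [he, hqhi] at h
          have : a ∈ ({b, c} : Finset V) := by rw [← h]; simp
          simp [hab, Ne.symm hca] at this
        have := (hdvf r hr q hq hrq).1
        rw [hx, h', hqlo] at this
        exact this rfl
    exact ⟨hlo1, hhi1, hlo2, hhi2⟩
  -- insert p σ is a face of the Morse complex
  have key : (MorseComplex K).faces (insert p σ) := by
    refine ⟨Finset.insert_nonempty _ _, ?_, ?_⟩
    · intro r1 h1 r2 h2 hne12
      simp only [Set.mem_setOf_eq, Finset.mem_insert] at h1 h2
      rcases h1 with h1 | h1 <;> rcases h2 with h2 | h2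
      · exact absurd (h1.trans h2.symm) hne12
      · exact h1 ▸ compat r2 h2
      · exact h2 ▸ (compat r1 h1).symm'
      · exact hdvf r1 h1 r2 h2 hne12
    · rintro ⟨k, hk, c', hcW, hpath⟩
      by_cases hall : ∀ i, c' i ∈ σ
      · exact hnc ⟨k, hk, c', hall, hpath⟩
      push_neg at hall
      obtain ⟨j, hj⟩ := hall
      have hcj : c' j = p := by
        have := hcW j
        simp only [Set.mem_setOf_eq, Finset.mem_insert] at this
        tauto
      have hidx : j - 1 + 1 = j := by ring
      obtain ⟨hsub, hne', hcard⟩ := hpath (j - 1)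
      rw [hidx, hcj] at hsub hne' hcard
      have hedge : (c' (j - 1)).hi = ({a, b} : Finset V) := by
        apply huniq _ (c' (j - 1)).hi_face
        · rw [← hcard, hplo]; simp
        · exact hsub (by rw [hplo]; simp)
      have hmem := hcW (j - 1)
      simp only [Set.mem_setOf_eq, Finset.mem_insert] at hmem
      rcases hmem with hmem | hmem
      · rw [hmem] at hne'; exact hne' rfl
      · exact (compat _ hmem).2.2.2 hedge.symm
  have heq := hfacet.2 _ key (Finset.subset_insert p σ)
  rw [heq]
  exact Finset.mem_insert_self _ _
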